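/- In the distance-fraud model, the joint probabilities G_i = Pr(D_i ∩ F_i) satisfy, for all 1 ≤ i ≤ n: G_i = (1/2)·G_{i−1} + (1/8)·Pr(D_{i−1}), with G_0 = 1; consequently G_i = (1/2)^i + (1/8)·Σ_{j=1}^{i} Pr(D_{j−1})·(1/2)^{i−j}. In particular G_1 = 5/8. -/

import Mathlib

/-!  The distance-fraud model of the paper.  Bits are elements of `ZMod 2`
(XOR is `+`, AND is `*`).  A sample point consists of the uniformly
distributed, mutually independent `n`-bit strings `Q, R⁰, R¹, c, c̃`
(key register, answer registers, verifier's challenges, malicious prover's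
random challenge guesses). -/

/-- Sample space: `(Q, R⁰, R¹, c, c̃)`. -/
abbrev DistΩ (n : ℕ) :=
  (Fin n → ZMod 2) × (Fin n → ZMod 2) × (Fin n → ZMod 2) ×
  (Fin n → ZMod 2) × (Fin n → ZMod 2)

namespace Dist

variable {n : ℕ}

def keyQ (ω : DistΩ n) : Fin n → ZMod 2 := ω.1
def reg0 (ω : DistΩ n) : Fin n → ZMod 2 := ω.2.1
def reg1 (ω : DistΩ n) : Fin n → ZMod 2 := ω.2.2.1
/-- `c`, the verifier's challenges. -/
def cVer (ω : DistΩ n) : Fin n → ZMod 2 := ω.2.2.2.1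
/-- `c̃`, the malicious prover's random challenge guesses. -/
def cGuess (ω : DistΩ n) : Fin n → ZMod 2 := ω.2.2.2.2

/-- `f_Q` applied to the length-`i` prefix of the challenge string `c`. -/
def fQ (Q c : Fin n → ZMod 2) (i : ℕ) : ZMod 2 :=
  ∑ j : Fin n, if (j : ℕ) < i then c j * Q j else 0

/-- `R_j^{b}`: the register bit selected by the bit `b` at round `j+1`. -/
def reg (ω : DistΩ n) (b : ZMod 2) (j : Fin n) : ZMod 2 :=
  if b = 0 then reg0 ω j else reg1 ω j

/-- The malicious prover's early reply at round `j+1`: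
`a = R_j^{c̃_j} ⊕ f_Q(C̃_j)`. -/
def ans (ω : DistΩ n) (j : Fin n) : ZMod 2 :=
  reg ω (cGuess ω j) j + fQ (keyQ ω) (cGuess ω) ((j : ℕ) + 1)

/-- The correct answer expected by the verifier at round `j+1`. -/
def corr (ω : DistΩ n) (j : Fin n) : ZMod 2 :=
  reg ω (cVer ω j) j + fQ (keyQ ω) (cVer ω) ((j : ℕ) + 1)

/-- `D_i`: the malicious prover wins the first `i` rounds (`D_0` is the sure
event). -/
def D (i : ℕ) (ω : DistΩ n) : Prop :=
  ∀ j : Fin n, (j : ℕ) < i → ans ω j = corr ω j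

/-- `F_i`: the running guess of `f_Q(C_i)` is correct (`F_0` is the sure
event). -/
def F (i : ℕ) (ω : DistΩ n) : Prop :=
  fQ (keyQ ω) (cGuess ω) i = fQ (keyQ ω) (cVer ω) i

open Classical in
/-- Probability of an event under the uniform distribution on `DistΩ n`. -/
noncomputable def pr (n : ℕ) (E : DistΩ n → Prop) : ℚ :=
  ((Finset.univ.filter E).card : ℚ) / ((Finset.univ : Finset (DistΩ n)).card : ℚ)

/-- Conditional probability `Pr(A | B)`. -/
noncomputable def cpr (n : ℕ) (A B : DistΩ n → Prop) : ℚ :=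
  pr n (fun ω => A ω ∧ B ω) / pr n B

end Dist

namespace Dist
variable {n : ℕ}

abbrev B5 := ZMod 2 × ZMod 2 × ZMod 2 × ZMod 2 × ZMod 2

def upd (k : Fin n) (ω : DistΩ n) (b : B5) : DistΩ n :=
  (Function.update ω.1 k b.1, Function.update ω.2.1 k b.2.1,
   Function.update ω.2.2.1 k b.2.2.1, Function.update ω.2.2.2.1 k b.2.2.2.1,
   Function.update ω.2.2.2.2 k b.2.2.2.2)

def bitsAt (k : Fin n) (ω : DistΩ n) : B5 :=
  (ω.1 k, ω.2.1 k, ω.2.2.1 k, ω.2.2.2.1 k, ω.2.2.2.2 k)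

lemma bitsAt_upd (k : Fin n) (ω : DistΩ n) (b : B5) : bitsAt k (upd k ω b) = b := by
  simp [bitsAt, upd]

lemma upd_upd (k : Fin n) (ω : DistΩ n) (b b' : B5) :
    upd k (upd k ω b) b' = upd k ω b' := by
  simp [upd, Function.update_idem]

lemma upd_bitsAt (k : Fin n) (ω : DistΩ n) : upd k ω (bitsAt k ω) = ω := by
  simp [upd, bitsAt, Function.update_eq_self]

def swapEquiv (k : Fin n) : B5 × DistΩ n ≃ B5 × DistΩ n where
  toFun p := (bitsAt k p.2, upd k p.2 p.1)
  invFun p := (bitsAt k p.2, upd k p.2 p.1)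
  left_inv p := by simp [bitsAt_upd, upd_upd, upd_bitsAt]
  right_inv p := by simp [bitsAt_upd, upd_upd, upd_bitsAt]

lemma sum_upd (k : Fin n) (f : DistΩ n → ℕ) :
    ∑ ω : DistΩ n, ∑ b : B5, f (upd k ω b) = 32 * ∑ ω : DistΩ n, f ω := by
  have h := Fintype.sum_equiv (swapEquiv k) (fun p => f (upd k p.2 p.1))
    (fun p => f p.2) (fun p => rfl)
  calc ∑ ω : DistΩ n, ∑ b : B5, f (upd k ω b)
      = ∑ b : B5, ∑ ω : DistΩ n, f (upd k ω b) := Finset.sum_comm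
    _ = ∑ p : B5 × DistΩ n, f (upd k p.2 p.1) :=
        (Fintype.sum_prod_type (fun p : B5 × DistΩ n => f (upd k p.2 p.1))).symm
    _ = ∑ p : B5 × DistΩ n, f p.2 := h
    _ = ∑ b : B5, ∑ ω : DistΩ n, f ω :=
        Fintype.sum_prod_type (fun p : B5 × DistΩ n => f p.2)
    _ = 32 * ∑ ω : DistΩ n, f ω := by
        rw [Finset.sum_const, Finset.card_univ]
        simp [smul_eq_mul]

lemma fQ_congr {Q Q' c c' : Fin n → ZMod 2} {m : ℕ}
    (h : ∀ j : Fin n, (j : ℕ) < m → Q j = Q' j ∧ c j = c' j) :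
    fQ Q c m = fQ Q' c' m := by
  unfold fQ
  refine Finset.sum_congr rfl fun j _ => ?_
  split_ifs with hj
  · rw [(h j hj).1, (h j hj).2]
  · rfl

lemma fQ_update {Q c : Fin n → ZMod 2} (k : Fin n) (x y : ZMod 2) {m : ℕ}
    (hm : m ≤ (k : ℕ)) :
    fQ (Function.update Q k x) (Function.update c k y) m = fQ Q c m := by
  refine fQ_congr fun j hj => ?_
  have hne : j ≠ k := by
    intro e; subst e; omega
  simp [Function.update_of_ne hne]

lemma fQ_succ (Q c : Fin n → ZMod 2) (k : Fin n) :
    fQ Q c ((k : ℕ) + 1) = fQ Q c (k : ℕ) + c k * Q k := by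
  unfold fQ
  have key : ∀ j : Fin n, (if (j : ℕ) < (k : ℕ) + 1 then c j * Q j else 0)
      = (if (j : ℕ) < (k : ℕ) then c j * Q j else 0)
        + (if j = k then c j * Q j else 0) := by
    intro j
    rcases lt_trichotomy ((j : ℕ)) ((k : ℕ)) with h | h | h
    · have hne : j ≠ k := by intro e; subst e; omega
      simp [h, Nat.lt_succ_of_lt h, hne]
    · have he : j = k := Fin.ext h
      subst he
      simp [h]
    · have h1 : ¬ (j : ℕ) < (k : ℕ) + 1 := by omega
      have h2 : ¬ (j : ℕ) < (k : ℕ) := by omega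
      have hne : j ≠ k := by intro e; subst e; omega
      simp [h1, h2, hne]
  simp only [key, Finset.sum_add_distrib, Finset.sum_ite_eq' Finset.univ k
    (fun j => c j * Q j), Finset.mem_univ, if_true]

lemma ans_upd_lt (k : Fin n) (ω : DistΩ n) (b : B5) {j : Fin n}
    (hj : (j : ℕ) < (k : ℕ)) : ans (upd k ω b) j = ans ω j := by
  have hne : j ≠ k := by intro e; subst e; omega
  unfold ans reg
  simp only [upd, keyQ, cGuess, reg0, reg1]
  simp only [Function.update_of_ne hne]
  rw [fQ_update k _ _ (by omega)]
  rfl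

lemma corr_upd_lt (k : Fin n) (ω : DistΩ n) (b : B5) {j : Fin n}
    (hj : (j : ℕ) < (k : ℕ)) : corr (upd k ω b) j = corr ω j := by
  have hne : j ≠ k := by intro e; subst e; omega
  unfold corr reg
  simp only [upd, keyQ, cVer, reg0, reg1]
  simp only [Function.update_of_ne hne]
  rw [fQ_update k _ _ (by omega)]
  rfl

lemma D_upd (k : Fin n) (ω : DistΩ n) (b : B5) :
    D (k : ℕ) (upd k ω b) ↔ D (k : ℕ) ω := by
  constructor <;> intro h j hj
  · rw [← ans_upd_lt k ω b hj, ← corr_upd_lt k ω b hj]; exact h j hj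
  · rw [ans_upd_lt k ω b hj, corr_upd_lt k ω b hj]; exact h j hj

lemma D_succ (k : Fin n) (ω : DistΩ n) :
    D ((k : ℕ) + 1) ω ↔ D (k : ℕ) ω ∧ ans ω k = corr ω k := by
  constructor
  · intro h
    exact ⟨fun j hj => h j (by omega), h k (by omega)⟩
  · rintro ⟨h1, h2⟩ j hj
    rcases Nat.lt_succ_iff_lt_or_eq.mp hj with hj' | hj'
    · exact h1 j hj'
    · have : j = k := Fin.ext hj'
      subst this; exact h2

lemma ans_upd_k (k : Fin n) (ω : DistΩ n) (b : B5) :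
    ans (upd k ω b) k
      = (if b.2.2.2.2 = 0 then b.2.1 else b.2.2.1)
        + (fQ (keyQ ω) (cGuess ω) (k : ℕ) + b.2.2.2.2 * b.1) := by
  unfold ans reg
  simp only [upd, keyQ, cGuess, reg0, reg1]
  rw [fQ_succ, fQ_update k _ _ (le_refl _)]
  simp [Function.update_self]

lemma corr_upd_k (k : Fin n) (ω : DistΩ n) (b : B5) :
    corr (upd k ω b) k
      = (if b.2.2.2.1 = 0 then b.2.1 else b.2.2.1)
        + (fQ (keyQ ω) (cVer ω) (k : ℕ) + b.2.2.2.1 * b.1) := by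
  unfold corr reg
  simp only [upd, keyQ, cVer, reg0, reg1]
  rw [fQ_succ, fQ_update k _ _ (le_refl _)]
  simp [Function.update_self]

lemma F_upd_k (k : Fin n) (ω : DistΩ n) (b : B5) :
    F ((k : ℕ) + 1) (upd k ω b)
      ↔ fQ (keyQ ω) (cGuess ω) (k : ℕ) + b.2.2.2.2 * b.1
        = fQ (keyQ ω) (cVer ω) (k : ℕ) + b.2.2.2.1 * b.1 := by
  unfold F
  simp only [upd, keyQ, cGuess, cVer]
  rw [fQ_succ, fQ_succ, fQ_update k _ _ (le_refl _), fQ_update k _ _ (le_refl _)]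
  simp [Function.update_self]

open Classical in
lemma count32 (x y : ZMod 2) :
    (∑ b : B5, if ((if b.2.2.2.2 = 0 then b.2.1 else b.2.2.1) + (x + b.2.2.2.2 * b.1)
        = (if b.2.2.2.1 = 0 then b.2.1 else b.2.2.1) + (y + b.2.2.2.1 * b.1))
      ∧ (x + b.2.2.2.2 * b.1 = y + b.2.2.2.1 * b.1) then (1:ℕ) else 0)
    = if x = y then 20 else 4 := by
  revert x y; decide

open Classical in
lemma point (k : Fin n) (ω : DistΩ n) :
    (∑ b : B5, if D ((k : ℕ) + 1) (upd k ω b) ∧ F ((k : ℕ) + 1) (upd k ω b)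
        then (1:ℕ) else 0)
      = if D (k : ℕ) ω then (if F (k : ℕ) ω then 20 else 4) else 0 := by
  by_cases hD : D (k : ℕ) ω
  · set x := fQ (keyQ ω) (cGuess ω) (k : ℕ) with hx
    set y := fQ (keyQ ω) (cVer ω) (k : ℕ) with hy
    have hiff : ∀ b : B5,
        (D ((k : ℕ) + 1) (upd k ω b) ∧ F ((k : ℕ) + 1) (upd k ω b))
        ↔ (((if b.2.2.2.2 = 0 then b.2.1 else b.2.2.1) + (x + b.2.2.2.2 * b.1)
              = (if b.2.2.2.1 = 0 then b.2.1 else b.2.2.1) + (y + b.2.2.2.1 * b.1))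
            ∧ (x + b.2.2.2.2 * b.1 = y + b.2.2.2.1 * b.1)) := by
      intro b
      rw [D_succ, D_upd, ans_upd_k, corr_upd_k, F_upd_k]
      simp [hD, hx, hy]
    calc (∑ b : B5, if D ((k : ℕ) + 1) (upd k ω b) ∧ F ((k : ℕ) + 1) (upd k ω b)
            then (1:ℕ) else 0)
        = ∑ b : B5, if ((if b.2.2.2.2 = 0 then b.2.1 else b.2.2.1) + (x + b.2.2.2.2 * b.1)
              = (if b.2.2.2.1 = 0 then b.2.1 else b.2.2.1) + (y + b.2.2.2.1 * b.1))
            ∧ (x + b.2.2.2.2 * b.1 = y + b.2.2.2.1 * b.1) then (1:ℕ) else 0 :=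
          Finset.sum_congr rfl fun b _ => if_congr (hiff b) rfl rfl
      _ = if x = y then 20 else 4 := count32 x y
      _ = if D (k : ℕ) ω then (if F (k : ℕ) ω then 20 else 4) else 0 := by
          rw [if_pos hD]
          exact if_congr Iff.rfl rfl rfl
  · rw [if_neg hD]
    refine Finset.sum_eq_zero fun b _ => ?_
    rw [if_neg]
    rintro ⟨hd, -⟩
    exact hD ((D_upd k ω b).mp ((D_succ k (upd k ω b)).mp hd).1)

open Classical in
lemma card_step {i : ℕ} (h1 : 1 ≤ i) (h2 : i ≤ n) :
    32 * (∑ ω : DistΩ n, if D i ω ∧ F i ω then (1:ℕ) else 0)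
      = 20 * (∑ ω : DistΩ n, if D (i-1) ω ∧ F (i-1) ω then (1:ℕ) else 0)
        + 4 * (∑ ω : DistΩ n, if D (i-1) ω ∧ ¬ F (i-1) ω then (1:ℕ) else 0) := by
  set k : Fin n := ⟨i - 1, by omega⟩ with hkdef
  have hk1 : (k : ℕ) + 1 = i := by simp [hkdef]; omega
  calc 32 * (∑ ω : DistΩ n, if D i ω ∧ F i ω then (1:ℕ) else 0)
      = ∑ ω : DistΩ n, ∑ b : B5, (if D i (upd k ω b) ∧ F i (upd k ω b) then (1:ℕ) else 0) :=
        (sum_upd k _).symm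
    _ = ∑ ω : DistΩ n, (if D (k : ℕ) ω then (if F (k : ℕ) ω then 20 else 4) else 0) := by
        refine Finset.sum_congr rfl fun ω _ => ?_
        rw [← hk1]
        exact point k ω
    _ = ∑ ω : DistΩ n, (20 * (if D (i-1) ω ∧ F (i-1) ω then (1:ℕ) else 0)
          + 4 * (if D (i-1) ω ∧ ¬ F (i-1) ω then (1:ℕ) else 0)) := by
        refine Finset.sum_congr rfl fun ω _ => ?_
        have hk : (k : ℕ) = i - 1 := rfl
        rw [hk]
        by_cases hD : D (i-1) ω <;> by_cases hF : F (i-1) ω <;>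
          simp [hD, hF]
    _ = _ := by
        rw [Finset.sum_add_distrib, ← Finset.mul_sum, ← Finset.mul_sum]

open Classical in
lemma pr_eq (P : DistΩ n → Prop) :
    pr n P = ((∑ ω : DistΩ n, if P ω then (1:ℕ) else 0 : ℕ) : ℚ)
      / ((Fintype.card (DistΩ n) : ℚ)) := by
  rw [pr, Finset.card_filter, Finset.card_univ]

lemma card_ne_zero : ((Fintype.card (DistΩ n) : ℚ)) ≠ 0 := by
  exact_mod_cast Fintype.card_ne_zero

open Classical in
lemma pr_DF (i : ℕ) :
    pr n (fun ω => D i ω ∧ F i ω)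
      = ((∑ ω : DistΩ n, if D i ω ∧ F i ω then (1:ℕ) else 0 : ℕ) : ℚ)
        / ((Fintype.card (DistΩ n) : ℚ)) := by
  rw [pr, Finset.card_filter, Finset.card_univ]
  try rfl
  try (congr 1; congr 1; refine Finset.sum_congr rfl fun ω _ => ?_; split_ifs <;> rfl)

open Classical in
lemma pr_D (i : ℕ) :
    pr n (D i)
      = ((∑ ω : DistΩ n, if D i ω then (1:ℕ) else 0 : ℕ) : ℚ)
        / ((Fintype.card (DistΩ n) : ℚ)) := by
  rw [pr, Finset.card_filter, Finset.card_univ]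
  try rfl
  try (congr 1; congr 1; refine Finset.sum_congr rfl fun ω _ => ?_; split_ifs <;> rfl)

open Classical in
lemma pr_true (P : DistΩ n → Prop) (h : ∀ ω, P ω) : pr n P = 1 := by
  rw [pr_eq]
  have : (∑ ω : DistΩ n, if P ω then (1:ℕ) else 0) = Fintype.card (DistΩ n) := by
    rw [Fintype.card]
    rw [Finset.card_eq_sum_ones]
    exact Finset.sum_congr rfl fun ω _ => if_pos (h ω)
  rw [this]
  exact div_self card_ne_zero

lemma D_zero (ω : DistΩ n) : D 0 ω := fun j hj => absurd hj (by omega)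

lemma F_zero (ω : DistΩ n) : F 0 ω := by
  unfold F fQ
  simp

open Classical in
lemma recursion {i : ℕ} (h1 : 1 ≤ i) (h2 : i ≤ n) :
    pr n (fun ω => D i ω ∧ F i ω)
      = (1 / 2) * pr n (fun ω => D (i - 1) ω ∧ F (i - 1) ω)
        + (1 / 8) * pr n (D (i - 1)) := by
  have key := card_step (n := n) h1 h2
  have hsplit : (∑ ω : DistΩ n, if D (i-1) ω then (1:ℕ) else 0)
      = (∑ ω : DistΩ n, if D (i-1) ω ∧ F (i-1) ω then (1:ℕ) else 0)
        + (∑ ω : DistΩ n, if D (i-1) ω ∧ ¬ F (i-1) ω then (1:ℕ) else 0) := by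
    rw [← Finset.sum_add_distrib]
    refine Finset.sum_congr rfl fun ω _ => ?_
    by_cases hD : D (i-1) ω <;> by_cases hF : F (i-1) ω <;> simp [hD, hF]
  have key' : (32:ℚ) * ((∑ ω : DistΩ n, if D i ω ∧ F i ω then (1:ℕ) else 0 : ℕ) : ℚ)
      = 20 * ((∑ ω : DistΩ n, if D (i-1) ω ∧ F (i-1) ω then (1:ℕ) else 0 : ℕ) : ℚ)
        + 4 * ((∑ ω : DistΩ n, if D (i-1) ω ∧ ¬ F (i-1) ω then (1:ℕ) else 0 : ℕ) : ℚ) := by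
    exact_mod_cast key
  have hsplit' : ((∑ ω : DistΩ n, if D (i-1) ω then (1:ℕ) else 0 : ℕ) : ℚ)
      = ((∑ ω : DistΩ n, if D (i-1) ω ∧ F (i-1) ω then (1:ℕ) else 0 : ℕ) : ℚ)
        + ((∑ ω : DistΩ n, if D (i-1) ω ∧ ¬ F (i-1) ω then (1:ℕ) else 0 : ℕ) : ℚ) := by
    exact_mod_cast hsplit
  rw [pr_DF, pr_DF, pr_D]
  have hmain : ((∑ ω : DistΩ n, if D i ω ∧ F i ω then (1:ℕ) else 0 : ℕ) : ℚ)
      = (1/2) * ((∑ ω : DistΩ n, if D (i-1) ω ∧ F (i-1) ω then (1:ℕ) else 0 : ℕ) : ℚ)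
        + (1/8) * ((∑ ω : DistΩ n, if D (i-1) ω then (1:ℕ) else 0 : ℕ) : ℚ) := by
    linarith
  linear_combination hmain / ((Fintype.card (DistΩ n) : ℚ))

end Dist

open Dist in
/-- the joint probabilities `G_i = Pr(D_i ∩ F_i)` satisfy
`G_i = (1/2)·G_{i−1} + (1/8)·Pr(D_{i−1})` with `G_0 = 1`; consequently
`G_i = (1/2)^i + (1/8)·Σ_{j=1}^{i} Pr(D_{j−1})·(1/2)^{i−j}`, and in particular
`G_1 = 5/8`. -/
theorem distance_fraud_joint_recursion (n : ℕ) :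
    (∀ i, 1 ≤ i → i ≤ n →
      pr n (fun ω => D i ω ∧ F i ω)
        = (1 / 2) * pr n (fun ω => D (i - 1) ω ∧ F (i - 1) ω)
          + (1 / 8) * pr n (D (i - 1))) ∧
    pr n (fun ω => D 0 ω ∧ F 0 ω) = 1 ∧
    (∀ i, 1 ≤ i → i ≤ n →
      pr n (fun ω => D i ω ∧ F i ω)
        = (1 / 2) ^ i
          + (1 / 8) * ∑ j ∈ Finset.Icc 1 i,
              pr n (D (j - 1)) * (1 / 2) ^ (i - j)) ∧
    (1 ≤ n → pr n (fun ω => D 1 ω ∧ F 1 ω) = 5 / 8) := by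
  have hG0 : pr n (fun ω => D 0 ω ∧ F 0 ω) = 1 :=
    pr_true _ fun ω => ⟨D_zero ω, F_zero ω⟩
  have hD0 : pr n (D 0) = 1 := pr_true _ D_zero
  have part3 : ∀ i, 1 ≤ i → i ≤ n →
      pr n (fun ω => D i ω ∧ F i ω)
        = (1 / 2) ^ i
          + (1 / 8) * ∑ j ∈ Finset.Icc 1 i,
              pr n (D (j - 1)) * (1 / 2) ^ (i - j) := by
    intro i hi
    induction i, hi using Nat.le_induction with
    | base =>
      intro hn
      rw [recursion le_rfl hn]
      simp [hG0]
    | succ i hi ih =>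
      intro hn
      have hin : i ≤ n := by omega
      rw [recursion (by omega) (le_of_eq rfl |>.trans hn), Nat.add_sub_cancel, ih hin]
      rw [Finset.sum_Icc_succ_top (by omega : 1 ≤ i + 1)]
      have hsum : ∑ j ∈ Finset.Icc 1 i, pr n (D (j - 1)) * (1 / 2 : ℚ) ^ (i + 1 - j)
          = (1/2) * ∑ j ∈ Finset.Icc 1 i, pr n (D (j - 1)) * (1 / 2 : ℚ) ^ (i - j) := by
        rw [Finset.mul_sum]
        refine Finset.sum_congr rfl fun j hj => ?_
        have hj' : 1 ≤ j ∧ j ≤ i := by simpa using hj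
        have : i + 1 - j = (i - j) + 1 := by omega
        rw [this, pow_succ]
        ring
      rw [hsum]
      simp only [Nat.add_sub_cancel, Nat.sub_self, pow_zero]
      ring
  refine ⟨fun i hi hin => recursion hi hin, hG0, part3, fun hn => ?_⟩
  rw [part3 1 le_rfl hn]
  simp [hD0]
  norm_num
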